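/- For any two perfect matchings P, P' of a snake graph G, the symmetric difference (P ∪ P') \ (P ∩ P') is a disjoint union of cycles in G, and each such cycle encloses a set of consecutive tiles forming a connected snake subgraph of G. -/

import Mathlib

/-- A position in the integer grid; tiles are unit squares with a given south-west corner. -/
abbrev Pos : Type := ℤ × ℤ

/-- An edge of the grid: a base vertex together with a direction
(`true` = horizontal edge to the east, `false` = vertical edge to the north). -/
abbrev SEdge : Type := Pos × Bool

/-- The two endpoints of an edge. -/
def edgeVerts (e : SEdge) : Finset Pos :=
  {e.1, if e.2 then (e.1.1 + 1, e.1.2) else (e.1.1, e.1.2 + 1)}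

/-- The four edges of the unit-square tile whose south-west corner is `p`:
bottom, left, right and top edges. -/
def tileEdges (p : Pos) : Finset SEdge :=
  {(p, true), (p, false), ((p.1 + 1, p.2), false), ((p.1, p.2 + 1), true)}

/-- The four vertices of the tile with south-west corner `p`. -/
def tileVerts (p : Pos) : Finset Pos := (tileEdges p).biUnion edgeVerts

/-- The list of south-west corners of the tiles of a snake graph built from gluing data `g`
(`true` = the next tile is glued to the right edge, `false` = glued to the top edge),
starting at position `p`. -/
def tilePosFrom : List Bool → Pos → List Pos
  | [], p => [p]
  | b :: g, p => p :: tilePosFrom g (if b then (p.1 + 1, p.2) else (p.1, p.2 + 1))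

/-- The tiles of the snake graph with gluing data `g`; a snake graph with `n + 1` tiles
corresponds to `g` of length `n`. -/
def snakeTiles (g : List Bool) : List Pos := tilePosFrom g (0, 0)

/-- The edge set of the snake graph with gluing data `g`. -/
def snakeEdges (g : List Bool) : Finset SEdge :=
  (snakeTiles g).toFinset.biUnion tileEdges

/-- The vertex set of the snake graph with gluing data `g`. -/
def snakeVerts (g : List Bool) : Finset Pos := (snakeEdges g).biUnion edgeVerts

/-- `P` is a perfect matching of the graph with edge set `E`: a subset of the edges such
that every vertex is incident to exactly one edge of `P`. -/
def IsPM (E P : Finset SEdge) : Prop :=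
  P ⊆ E ∧ ∀ v ∈ E.biUnion edgeVerts, ∃! e, e ∈ P ∧ v ∈ edgeVerts e

/-- The boundary edges of the snake graph: edges lying in exactly one tile. -/
def boundary (g : List Bool) : Finset SEdge :=
  (snakeEdges g).filter
    (fun e => (snakeTiles g).countP (fun p => decide (e ∈ tileEdges p)) = 1)

/-- `P` is the minimal perfect matching of the snake graph with gluing data `g`:
the perfect matching consisting only of boundary edges which contains the bottom
edge of the first tile. -/
def IsMinPM (g : List Bool) (P : Finset SEdge) : Prop :=
  IsPM (snakeEdges g) P ∧ P ⊆ boundary g ∧ (((0 : ℤ), (0 : ℤ)), true) ∈ P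

/-- The tiles of the snake subgraph of `g` consisting of the consecutive tiles
`a, a+1, …, b`. -/
def subTiles (g : List Bool) (a b : ℕ) : List Pos := ((snakeTiles g).drop a).take (b + 1 - a)

/-- The edge set of the snake subgraph of `g` on the consecutive tiles `a, …, b`. -/
def subEdges (g : List Bool) (a b : ℕ) : Finset SEdge :=
  (subTiles g a b).toFinset.biUnion tileEdges

/-- The boundary cycle of the snake subgraph on tiles `a, …, b`: its edges lying in
exactly one of these tiles. -/
def subBoundary (g : List Bool) (a b : ℕ) : Finset SEdge :=
  (subEdges g a b).filter
    (fun e => (subTiles g a b).countP (fun p => decide (e ∈ tileEdges p)) = 1)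



open scoped symmDiff

lemma snk_mem_tileEdges {e : SEdge} {q : Pos} :
    e ∈ tileEdges q ↔ e = (q,true) ∨ e = (q,false) ∨ e = ((q.1+1,q.2),false) ∨ e = ((q.1,q.2+1),true) := by
  simp [tileEdges]

lemma snk_mem_edgeVerts {v : Pos} {e : SEdge} :
    v ∈ edgeVerts e ↔ v = e.1 ∨ v = (if e.2 then (e.1.1 + 1, e.1.2) else (e.1.1, e.1.2 + 1)) := by
  simp [edgeVerts]

lemma snk_corner_sw {e : SEdge} {q : Pos} (h : e ∈ tileEdges q) (hv : q ∈ edgeVerts e) :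
    e = (q, true) ∨ e = (q, false) := by
  obtain ⟨qx, qy⟩ := q
  rcases snk_mem_tileEdges.1 h with h|h|h|h <;> subst h <;>
    rcases snk_mem_edgeVerts.1 hv with h2|h2 <;>
    first | (left; rfl) | (right; rfl) | (exfalso; simp [Prod.ext_iff] at h2; omega) | (exfalso; simp [Prod.ext_iff] at h2)

lemma snk_corner_se {e : SEdge} {q : Pos} (h : e ∈ tileEdges q)
    (hv : ((q.1+1, q.2) : Pos) ∈ edgeVerts e) :
    e = (q, true) ∨ e = ((q.1+1,q.2), false) := by
  obtain ⟨qx, qy⟩ := q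
  rcases snk_mem_tileEdges.1 h with h|h|h|h <;> subst h <;>
    rcases snk_mem_edgeVerts.1 hv with h2|h2 <;>
    first | (left; rfl) | (right; rfl) | (exfalso; simp [Prod.ext_iff] at h2; omega) | (exfalso; simp [Prod.ext_iff] at h2)

lemma snk_corner_nw {e : SEdge} {q : Pos} (h : e ∈ tileEdges q)
    (hv : ((q.1, q.2+1) : Pos) ∈ edgeVerts e) :
    e = (q, false) ∨ e = ((q.1,q.2+1), true) := by
  obtain ⟨qx, qy⟩ := q
  rcases snk_mem_tileEdges.1 h with h|h|h|h <;> subst h <;>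
    rcases snk_mem_edgeVerts.1 hv with h2|h2 <;>
    first | (left; rfl) | (right; rfl) | (exfalso; simp [Prod.ext_iff] at h2; omega) | (exfalso; simp [Prod.ext_iff] at h2)

lemma snk_corner_ne {e : SEdge} {q : Pos} (h : e ∈ tileEdges q)
    (hv : ((q.1+1, q.2+1) : Pos) ∈ edgeVerts e) :
    e = ((q.1+1,q.2), false) ∨ e = ((q.1,q.2+1), true) := by
  obtain ⟨qx, qy⟩ := q
  rcases snk_mem_tileEdges.1 h with h|h|h|h <;> subst h <;>
    rcases snk_mem_edgeVerts.1 hv with h2|h2 <;>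
    first | (left; rfl) | (right; rfl) | (exfalso; simp [Prod.ext_iff] at h2; omega) | (exfalso; simp [Prod.ext_iff] at h2)


lemma snk_sigma {e : SEdge} {q : Pos} (h : e ∈ tileEdges q) :
    e.1.1 + e.1.2 = q.1 + q.2 ∨ e.1.1 + e.1.2 = q.1 + q.2 + 1 := by
  rcases snk_mem_tileEdges.1 h with h|h|h|h <;> subst h <;> simp <;> omega

lemma snk_box {e : SEdge} {q v : Pos} (h : e ∈ tileEdges q) (hv : v ∈ edgeVerts e) :
    q.1 ≤ v.1 ∧ v.1 ≤ q.1 + 1 ∧ q.2 ≤ v.2 ∧ v.2 ≤ q.2 + 1 := by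
  rcases snk_mem_tileEdges.1 h with h|h|h|h <;> subst h <;>
    rcases snk_mem_edgeVerts.1 hv with h|h <;> subst h <;> simp <;> omega



lemma snk_length (g : List Bool) (p : Pos) : (tilePosFrom g p).length = g.length + 1 := by
  induction g generalizing p with
  | nil => rfl
  | cons b g ih => simp [tilePosFrom, ih]

lemma snk_mono {g : List Bool} {p q : Pos} (h : q ∈ tilePosFrom g p) :
    p.1 ≤ q.1 ∧ p.2 ≤ q.2 := by
  induction g generalizing p with
  | nil => simp [tilePosFrom] at h; subst h; omega
  | cons b g ih =>
    simp only [tilePosFrom, List.mem_cons] at h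
    rcases h with h | h
    · subst h; omega
    · have := ih h
      split at this <;> omega

lemma snk_sum (g : List Bool) (p : Pos) (i : ℕ) (h : i < (tilePosFrom g p).length) :
    ((tilePosFrom g p)[i]).1 + ((tilePosFrom g p)[i]).2 = p.1 + p.2 + i := by
  induction g generalizing p i with
  | nil =>
    simp [snk_length] at h
    subst h; simp [tilePosFrom]
  | cons b g ih =>
    match i with
    | 0 => simp [tilePosFrom]
    | (j+1) =>
      have h' : j < (tilePosFrom g (if b then (p.1 + 1, p.2) else (p.1, p.2 + 1))).length := by
        simpa [tilePosFrom] using h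
      have := ih (if b then (p.1 + 1, p.2) else (p.1, p.2 + 1)) j h'
      simp only [tilePosFrom, List.getElem_cons_succ]
      rw [this]
      split <;> simp <;> omega

lemma snk_pair_parity {x y : SEdge} {A : Finset SEdge} (hxy : x ≠ y) (hA : A ⊆ {x, y})
    (hcard : A.card % 2 = 0) : (x ∈ A ↔ y ∈ A) := by
  constructor
  · intro hx
    by_contra hy
    have : A = {x} := by
      apply Finset.Subset.antisymm
      · intro z hz
        rcases Finset.mem_insert.1 (hA hz) with h | h
        · simp [h]
        · simp only [Finset.mem_singleton] at h; subst h; exact absurd hz hy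
      · simpa using hx
    rw [this] at hcard; simp at hcard
  · intro hy
    by_contra hx
    have : A = {y} := by
      apply Finset.Subset.antisymm
      · intro z hz
        rcases Finset.mem_insert.1 (hA hz) with h | h
        · subst h; exact absurd hz hx
        · simpa using h
      · simpa using hy
    rw [this] at hcard; simp at hcard


lemma snk_everts (e : SEdge) : edgeVerts e =
    if e.2 then {e.1, (e.1.1 + 1, e.1.2)} else {e.1, (e.1.1, e.1.2 + 1)} := by
  unfold edgeVerts; split <;> rfl

lemma snk_tile_deg (p v : Pos) :
    ((tileEdges p).filter (fun e => v ∈ edgeVerts e)).card % 2 = 0 := by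
  obtain ⟨x, y⟩ := p
  by_cases h1 : v = (x, y)
  · have : (tileEdges (x,y)).filter (fun e => v ∈ edgeVerts e) = {((x,y),true), ((x,y),false)} := by
      ext e
      subst h1
      simp only [Finset.mem_filter, tileEdges, Finset.mem_insert, Finset.mem_singleton,
        snk_everts]
      constructor
      · rintro ⟨(rfl|rfl|rfl|rfl), hv⟩ <;> simp_all [Prod.ext_iff] <;> omega
      · rintro (rfl|rfl) <;> simp
    rw [this]
    rw [Finset.card_insert_of_notMem (by simp), Finset.card_singleton]
  · by_cases h2 : v = (x+1, y)
    · have : (tileEdges (x,y)).filter (fun e => v ∈ edgeVerts e)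
          = {((x,y),true), ((x+1,y),false)} := by
        ext e
        subst h2
        simp only [Finset.mem_filter, tileEdges, Finset.mem_insert, Finset.mem_singleton,
          snk_everts]
        constructor
        · rintro ⟨(rfl|rfl|rfl|rfl), hv⟩ <;> simp_all [Prod.ext_iff] <;> omega
        · rintro (rfl|rfl) <;> simp
      rw [this]
      rw [Finset.card_insert_of_notMem (by simp), Finset.card_singleton]
    · by_cases h3 : v = (x, y+1)
      · have : (tileEdges (x,y)).filter (fun e => v ∈ edgeVerts e)
            = {((x,y),false), ((x,y+1),true)} := by
          ext e
          subst h3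
          simp only [Finset.mem_filter, tileEdges, Finset.mem_insert, Finset.mem_singleton,
            snk_everts]
          constructor
          · rintro ⟨(rfl|rfl|rfl|rfl), hv⟩ <;> simp_all [Prod.ext_iff] <;> omega
          · rintro (rfl|rfl) <;> simp
        rw [this]
        rw [Finset.card_insert_of_notMem (by simp [Prod.ext_iff]), Finset.card_singleton]
      · by_cases h4 : v = (x+1, y+1)
        · have : (tileEdges (x,y)).filter (fun e => v ∈ edgeVerts e)
              = {((x+1,y),false), ((x,y+1),true)} := by
            ext e
            subst h4
            simp only [Finset.mem_filter, tileEdges, Finset.mem_insert, Finset.mem_singleton,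
              snk_everts]
            constructor
            · rintro ⟨(rfl|rfl|rfl|rfl), hv⟩ <;> simp_all [Prod.ext_iff] <;> omega
            · rintro (rfl|rfl) <;> simp
          rw [this]
          rw [Finset.card_insert_of_notMem (by simp [Prod.ext_iff]), Finset.card_singleton]
        · have : (tileEdges (x,y)).filter (fun e => v ∈ edgeVerts e) = ∅ := by
            ext e
            simp only [Finset.mem_filter, tileEdges, Finset.mem_insert, Finset.mem_singleton,
              snk_everts, Finset.notMem_empty, iff_false, not_and]
            rintro (rfl|rfl|rfl|rfl) <;> simp_all [Prod.ext_iff] <;> omega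
          rw [this]
          rfl


def snkBd (S : Finset Pos) : Finset SEdge :=
  (S.biUnion tileEdges).filter (fun e => (S.filter (fun q => e ∈ tileEdges q)).card % 2 = 1)

lemma snk_mem_Bd {S : Finset Pos} {e : SEdge} :
    e ∈ snkBd S ↔ (S.filter (fun q => e ∈ tileEdges q)).card % 2 = 1 := by
  constructor
  · intro h; exact (Finset.mem_filter.1 h).2
  · intro h
    refine Finset.mem_filter.2 ⟨?_, h⟩
    have : (S.filter (fun q => e ∈ tileEdges q)).Nonempty := by
      rw [← Finset.card_pos]; omega
    obtain ⟨q, hq⟩ := this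
    obtain ⟨hq1, hq2⟩ := Finset.mem_filter.1 hq
    exact Finset.mem_biUnion.2 ⟨q, hq1, hq2⟩

lemma snk_filter_symmDiff {A B : Finset SEdge} (P : SEdge → Prop) [DecidablePred P] :
    (A ∆ B).filter P = (A.filter P) ∆ (B.filter P) := by
  ext e
  simp [Finset.mem_symmDiff, Finset.mem_filter]
  tauto

lemma snk_card_symmDiff_parity (A B : Finset SEdge) :
    (A ∆ B).card % 2 = (A.card + B.card) % 2 := by
  have h1 : A ∆ B = (A ∪ B) \ (A ∩ B) := symmDiff_eq_sup_sdiff_inf A B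
  have h2 : (A ∩ B) ⊆ (A ∪ B) := Finset.inter_subset_union
  have h3 := Finset.card_sdiff_of_subset h2
  have h4 := Finset.card_union_add_card_inter A B
  rw [h1, h3]
  have h5 : (A ∩ B).card ≤ (A ∪ B).card := Finset.card_le_card h2
  omega

lemma snk_Bd_insert {S : Finset Pos} {p : Pos} (hp : p ∉ S) :
    snkBd (insert p S) = snkBd S ∆ tileEdges p := by
  ext e
  rw [snk_mem_Bd, Finset.mem_symmDiff, snk_mem_Bd]
  have : (insert p S).filter (fun q => e ∈ tileEdges q)
      = if e ∈ tileEdges p then insert p (S.filter (fun q => e ∈ tileEdges q))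
        else S.filter (fun q => e ∈ tileEdges q) := Finset.filter_insert _ _ _
  rw [this]
  by_cases he : e ∈ tileEdges p
  · rw [if_pos he, Finset.card_insert_of_notMem (fun h => hp (Finset.mem_filter.1 h).1)]
    simp [he]
    omega
  · rw [if_neg he]
    simp [he]


lemma snk_tile_of_mem {e : SEdge} {q : Pos} (h : e ∈ tileEdges q) :
    q = e.1 ∨ q = (e.1.1, e.1.2 - 1) ∨ q = (e.1.1 - 1, e.1.2) := by
  rcases snk_mem_tileEdges.1 h with rfl|rfl|rfl|rfl <;> simp [Prod.ext_iff] <;> omega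

lemma snk_both {D : Finset SEdge} {v : Pos} {x y : SEdge} (hxy : x ≠ y)
    (hvx : v ∈ edgeVerts x) (hvy : v ∈ edgeVerts y)
    (hencl : ∀ e ∈ D, v ∈ edgeVerts e → e = x ∨ e = y)
    (hdeg : (D.filter (fun e => v ∈ edgeVerts e)).card % 2 = 0) :
    (x ∈ D ↔ y ∈ D) := by
  have := snk_pair_parity (A := D.filter (fun e => v ∈ edgeVerts e)) hxy ?_ hdeg
  · constructor
    · intro hx
      exact (Finset.mem_filter.1 (this.1 (Finset.mem_filter.2 ⟨hx, hvx⟩))).1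
    · intro hy
      exact (Finset.mem_filter.1 (this.2 (Finset.mem_filter.2 ⟨hy, hvy⟩))).1
  · intro e he
    obtain ⟨he1, he2⟩ := Finset.mem_filter.1 he
    rcases hencl e he1 he2 with rfl | rfl <;> simp

lemma snk_Bd_singleton (p : Pos) : snkBd {p} = tileEdges p := by
  ext e
  rw [snk_mem_Bd]
  by_cases he : e ∈ tileEdges p
  · simp [Finset.filter_singleton, he]
  · simp [Finset.filter_singleton, he]

lemma snk_Bd_empty : snkBd (∅ : Finset Pos) = ∅ := by
  ext e; rw [snk_mem_Bd]; simp



lemma snk_main (g : List Bool) (p : Pos) (D : Finset SEdge)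
    (hD : D ⊆ (tilePosFrom g p).toFinset.biUnion tileEdges)
    (hdeg : ∀ v : Pos, (D.filter (fun e => v ∈ edgeVerts e)).card % 2 = 0) :
    ∃ S ⊆ (tilePosFrom g p).toFinset, D = snkBd S := by
  induction g generalizing p D with
  | nil =>
    have hD' : D ⊆ tileEdges p := by
      intro e he
      have := hD he
      simpa [tilePosFrom] using this
    have h1 : ((p, true) : SEdge) ∈ D ↔ ((p, false) : SEdge) ∈ D :=
      snk_both (by simp) (by simp [snk_mem_edgeVerts]) (by simp [snk_mem_edgeVerts])
        (fun e he hv => snk_corner_sw (hD' he) hv) (hdeg p)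
    have h2 : ((p, true) : SEdge) ∈ D ↔ (((p.1+1,p.2), false) : SEdge) ∈ D :=
      snk_both (by simp [Prod.ext_iff]) (by simp [snk_mem_edgeVerts])
        (by simp [snk_mem_edgeVerts]) (fun e he hv => snk_corner_se (hD' he) hv)
        (hdeg (p.1+1, p.2))
    have h3 : ((p, false) : SEdge) ∈ D ↔ (((p.1,p.2+1), true) : SEdge) ∈ D :=
      snk_both (by simp [Prod.ext_iff]) (by simp [snk_mem_edgeVerts])
        (by simp [snk_mem_edgeVerts]) (fun e he hv => snk_corner_nw (hD' he) hv)
        (hdeg (p.1, p.2+1))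
    by_cases hb : ((p, true) : SEdge) ∈ D
    · refine ⟨{p}, by simp [tilePosFrom], ?_⟩
      rw [snk_Bd_singleton]
      apply Finset.Subset.antisymm hD'
      intro e he
      rcases snk_mem_tileEdges.1 he with rfl|rfl|rfl|rfl
      · exact hb
      · exact h1.1 hb
      · exact h2.1 hb
      · exact h3.1 (h1.1 hb)
    · refine ⟨∅, by simp, ?_⟩
      rw [snk_Bd_empty]
      apply Finset.eq_empty_of_forall_notMem
      intro e he
      rcases snk_mem_tileEdges.1 (hD' he) with rfl|rfl|rfl|rfl
      · exact hb he
      · exact hb (h1.2 he)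
      · exact hb (h2.2 he)
      · exact hb (h1.2 (h3.2 he))
  | cons b g ih =>
    cases b
    -- ######################  b = false : next tile above, shared edge = top
    case false =>
      have hsplit : ∀ e ∈ D, e ∈ tileEdges p ∨
          e ∈ (tilePosFrom g (p.1, p.2+1)).toFinset.biUnion tileEdges := by
        intro e he
        have := hD he
        simp only [tilePosFrom, if_neg (Bool.false_ne_true), List.toFinset_cons,
          Finset.biUnion_insert, Finset.mem_union] at this
        exact this
      have hrest : ∀ {e : SEdge}, e ∈ (tilePosFrom g (p.1, p.2+1)).toFinset.biUnion tileEdges →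
          ∃ q, (p.1 ≤ q.1 ∧ p.2 + 1 ≤ q.2) ∧ e ∈ tileEdges q := by
        intro e he
        obtain ⟨q, hq, hq2⟩ := Finset.mem_biUnion.1 he
        exact ⟨q, snk_mono (List.mem_toFinset.1 hq), hq2⟩
      -- claims at the two private vertices
      have claim1 : ∀ e ∈ D, p ∈ edgeVerts e → e = (p, true) ∨ e = (p, false) := by
        intro e he hv
        rcases hsplit e he with h | h
        · exact snk_corner_sw h hv
        · obtain ⟨q, hm, hq2⟩ := hrest h
          have := snk_box hq2 hv
          omega
      have claim2 : ∀ e ∈ D, ((p.1+1, p.2) : Pos) ∈ edgeVerts e →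
          e = (p, true) ∨ e = ((p.1+1,p.2), false) := by
        intro e he hv
        rcases hsplit e he with h | h
        · exact snk_corner_se h hv
        · obtain ⟨q, hm, hq2⟩ := hrest h
          have := snk_box hq2 hv
          simp at this
          omega
      have h1 : ((p, true) : SEdge) ∈ D ↔ ((p, false) : SEdge) ∈ D :=
        snk_both (by simp) (by simp [snk_mem_edgeVerts]) (by simp [snk_mem_edgeVerts])
          claim1 (hdeg p)
      have h2 : ((p, true) : SEdge) ∈ D ↔ (((p.1+1,p.2), false) : SEdge) ∈ D :=
        snk_both (by simp [Prod.ext_iff]) (by simp [snk_mem_edgeVerts])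
          (by simp [snk_mem_edgeVerts]) claim2 (hdeg (p.1+1, p.2))
      -- private edges are not in the rest edges
      have hprivb : ((p, true) : SEdge) ∉ (tilePosFrom g (p.1, p.2+1)).toFinset.biUnion tileEdges := by
        intro h
        obtain ⟨q, hm, hq2⟩ := hrest h
        rcases snk_tile_of_mem hq2 with rfl|rfl|rfl <;> simp at hm <;> omega
      have hprivl : ((p, false) : SEdge) ∉ (tilePosFrom g (p.1, p.2+1)).toFinset.biUnion tileEdges := by
        intro h
        obtain ⟨q, hm, hq2⟩ := hrest h
        rcases snk_tile_of_mem hq2 with rfl|rfl|rfl <;> simp at hm <;> omega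
      have hprivr : (((p.1+1,p.2), false) : SEdge) ∉ (tilePosFrom g (p.1, p.2+1)).toFinset.biUnion tileEdges := by
        intro h
        obtain ⟨q, hm, hq2⟩ := hrest h
        rcases snk_tile_of_mem hq2 with rfl|rfl|rfl <;> simp at hm <;> omega
      have hsharedmem : (((p.1,p.2+1), true) : SEdge) ∈
          (tilePosFrom g (p.1, p.2+1)).toFinset.biUnion tileEdges := by
        refine Finset.mem_biUnion.2 ⟨(p.1, p.2+1), ?_, by rw [snk_mem_tileEdges]; tauto⟩
        rw [List.mem_toFinset]
        cases g <;> simp [tilePosFrom]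
      have hsub2 : ∀ S' ⊆ (tilePosFrom g (p.1, p.2+1)).toFinset,
          S' ⊆ (tilePosFrom (false :: g) p).toFinset := by
        intro S' hS' x hx
        simp only [tilePosFrom, if_neg (Bool.false_ne_true), List.toFinset_cons, Finset.mem_insert]
        exact Or.inr (hS' hx)
      by_cases hb : ((p, true) : SEdge) ∈ D
      · -- toggle the first tile
        have hl : ((p, false) : SEdge) ∈ D := h1.1 hb
        have hr : (((p.1+1,p.2), false) : SEdge) ∈ D := h2.1 hb
        set D2 := D ∆ tileEdges p with hD2def
        have hD2 : D2 ⊆ (tilePosFrom g (p.1, p.2+1)).toFinset.biUnion tileEdges := by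
          intro e he
          rcases Finset.mem_symmDiff.1 he with ⟨heD, het⟩ | ⟨het, heD⟩
          · rcases hsplit e heD with h | h
            · exact absurd h het
            · exact h
          · rcases snk_mem_tileEdges.1 het with rfl|rfl|rfl|rfl
            · exact absurd hb heD
            · exact absurd hl heD
            · exact absurd hr heD
            · exact hsharedmem
        have hdeg2 : ∀ v : Pos, (D2.filter (fun e => v ∈ edgeVerts e)).card % 2 = 0 := by
          intro v
          rw [hD2def, snk_filter_symmDiff, snk_card_symmDiff_parity]
          have := hdeg v
          have := snk_tile_deg p v
          omega
        obtain ⟨S', hS'sub, hS'⟩ := ih (p.1, p.2+1) D2 hD2 hdeg2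
        have hpS' : p ∉ S' := by
          intro h
          have := snk_mono (List.mem_toFinset.1 (hS'sub h))
          simp at this <;> omega
        refine ⟨insert p S', ?_, ?_⟩
        · intro x hx
          rcases Finset.mem_insert.1 hx with h | hx
          · subst h
            simp [tilePosFrom]
          · exact hsub2 S' hS'sub hx
        · rw [snk_Bd_insert hpS', ← hS', hD2def]
          exact (symmDiff_symmDiff_cancel_right (tileEdges p) D).symm
      · -- whole first tile is free of D
        have hD' : D ⊆ (tilePosFrom g (p.1, p.2+1)).toFinset.biUnion tileEdges := by
          intro e he
          rcases hsplit e he with h | h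
          · rcases snk_mem_tileEdges.1 h with rfl|rfl|rfl|rfl
            · exact absurd he hb
            · exact absurd (h1.2 he) hb
            · exact absurd (h2.2 he) hb
            · exact hsharedmem
          · exact h
        obtain ⟨S', hS'sub, hS'⟩ := ih (p.1, p.2+1) D hD' hdeg
        exact ⟨S', hsub2 S' hS'sub, hS'⟩
    -- ######################  b = true : next tile right, shared edge = right
    case true =>
      have hsplit : ∀ e ∈ D, e ∈ tileEdges p ∨
          e ∈ (tilePosFrom g (p.1+1, p.2)).toFinset.biUnion tileEdges := by
        intro e he
        have := hD he
        simp only [tilePosFrom, if_pos rfl, List.toFinset_cons,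
          Finset.biUnion_insert, Finset.mem_union] at this
        exact this
      have hrest : ∀ {e : SEdge}, e ∈ (tilePosFrom g (p.1+1, p.2)).toFinset.biUnion tileEdges →
          ∃ q, (p.1 + 1 ≤ q.1 ∧ p.2 ≤ q.2) ∧ e ∈ tileEdges q := by
        intro e he
        obtain ⟨q, hq, hq2⟩ := Finset.mem_biUnion.1 he
        exact ⟨q, snk_mono (List.mem_toFinset.1 hq), hq2⟩
      have claim1 : ∀ e ∈ D, p ∈ edgeVerts e → e = (p, true) ∨ e = (p, false) := by
        intro e he hv
        rcases hsplit e he with h | h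
        · exact snk_corner_sw h hv
        · obtain ⟨q, hm, hq2⟩ := hrest h
          have := snk_box hq2 hv
          omega
      have claim2 : ∀ e ∈ D, ((p.1, p.2+1) : Pos) ∈ edgeVerts e →
          e = (p, false) ∨ e = ((p.1,p.2+1), true) := by
        intro e he hv
        rcases hsplit e he with h | h
        · exact snk_corner_nw h hv
        · obtain ⟨q, hm, hq2⟩ := hrest h
          have := snk_box hq2 hv
          simp at this
          omega
      have h1 : ((p, true) : SEdge) ∈ D ↔ ((p, false) : SEdge) ∈ D :=
        snk_both (by simp) (by simp [snk_mem_edgeVerts]) (by simp [snk_mem_edgeVerts])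
          claim1 (hdeg p)
      have h2 : ((p, false) : SEdge) ∈ D ↔ (((p.1,p.2+1), true) : SEdge) ∈ D :=
        snk_both (by simp [Prod.ext_iff]) (by simp [snk_mem_edgeVerts])
          (by simp [snk_mem_edgeVerts]) claim2 (hdeg (p.1, p.2+1))
      have hprivb : ((p, true) : SEdge) ∉ (tilePosFrom g (p.1+1, p.2)).toFinset.biUnion tileEdges := by
        intro h
        obtain ⟨q, hm, hq2⟩ := hrest h
        rcases snk_tile_of_mem hq2 with rfl|rfl|rfl <;> simp at hm <;> omega
      have hprivl : ((p, false) : SEdge) ∉ (tilePosFrom g (p.1+1, p.2)).toFinset.biUnion tileEdges := by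
        intro h
        obtain ⟨q, hm, hq2⟩ := hrest h
        rcases snk_tile_of_mem hq2 with rfl|rfl|rfl <;> simp at hm <;> omega
      have hprivt : (((p.1,p.2+1), true) : SEdge) ∉ (tilePosFrom g (p.1+1, p.2)).toFinset.biUnion tileEdges := by
        intro h
        obtain ⟨q, hm, hq2⟩ := hrest h
        rcases snk_tile_of_mem hq2 with rfl|rfl|rfl <;> simp at hm <;> omega
      have hsharedmem : (((p.1+1,p.2), false) : SEdge) ∈
          (tilePosFrom g (p.1+1, p.2)).toFinset.biUnion tileEdges := by
        refine Finset.mem_biUnion.2 ⟨(p.1+1, p.2), ?_, by rw [snk_mem_tileEdges]; tauto⟩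
        rw [List.mem_toFinset]
        cases g <;> simp [tilePosFrom]
      have hsub2 : ∀ S' ⊆ (tilePosFrom g (p.1+1, p.2)).toFinset,
          S' ⊆ (tilePosFrom (true :: g) p).toFinset := by
        intro S' hS' x hx
        simp only [tilePosFrom, if_pos rfl, List.toFinset_cons, Finset.mem_insert]
        exact Or.inr (hS' hx)
      by_cases hb : ((p, true) : SEdge) ∈ D
      · have hl : ((p, false) : SEdge) ∈ D := h1.1 hb
        have ht : (((p.1,p.2+1), true) : SEdge) ∈ D := h2.1 hl
        set D2 := D ∆ tileEdges p with hD2def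
        have hD2 : D2 ⊆ (tilePosFrom g (p.1+1, p.2)).toFinset.biUnion tileEdges := by
          intro e he
          rcases Finset.mem_symmDiff.1 he with ⟨heD, het⟩ | ⟨het, heD⟩
          · rcases hsplit e heD with h | h
            · exact absurd h het
            · exact h
          · rcases snk_mem_tileEdges.1 het with rfl|rfl|rfl|rfl
            · exact absurd hb heD
            · exact absurd hl heD
            · exact hsharedmem
            · exact absurd ht heD
        have hdeg2 : ∀ v : Pos, (D2.filter (fun e => v ∈ edgeVerts e)).card % 2 = 0 := by
          intro v
          rw [hD2def, snk_filter_symmDiff, snk_card_symmDiff_parity]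
          have := hdeg v
          have := snk_tile_deg p v
          omega
        obtain ⟨S', hS'sub, hS'⟩ := ih (p.1+1, p.2) D2 hD2 hdeg2
        have hpS' : p ∉ S' := by
          intro h
          have := snk_mono (List.mem_toFinset.1 (hS'sub h))
          simp at this <;> omega
        refine ⟨insert p S', ?_, ?_⟩
        · intro x hx
          rcases Finset.mem_insert.1 hx with h | hx
          · subst h
            simp [tilePosFrom]
          · exact hsub2 S' hS'sub hx
        · rw [snk_Bd_insert hpS', ← hS', hD2def]
          exact (symmDiff_symmDiff_cancel_right (tileEdges p) D).symm
      · have hD' : D ⊆ (tilePosFrom g (p.1+1, p.2)).toFinset.biUnion tileEdges := by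
          intro e he
          rcases hsplit e he with h | h
          · rcases snk_mem_tileEdges.1 h with rfl|rfl|rfl|rfl
            · exact absurd he hb
            · exact absurd (h1.2 he) hb
            · exact hsharedmem
            · exact absurd (h1.2 (h2.2 he)) hb
          · exact h
        obtain ⟨S', hS'sub, hS'⟩ := ih (p.1+1, p.2) D hD' hdeg
        exact ⟨S', hsub2 S' hS'sub, hS'⟩


/-- Existence of left end of maximal run. -/
lemma snk_run_left (T : Finset ℕ) : ∀ i ∈ T,
    ∃ a, a ≤ i ∧ (∀ k ∈ Finset.Icc a i, k ∈ T) ∧ (a = 0 ∨ a - 1 ∉ T) := by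
  have H : ∀ m, ∀ i ∈ T, i ≤ m →
      ∃ a, a ≤ i ∧ (∀ k ∈ Finset.Icc a i, k ∈ T) ∧ (a = 0 ∨ a - 1 ∉ T) := by
    intro m
    induction m with
    | zero =>
      intro i hi h0
      interval_cases i
      exact ⟨0, le_refl 0, by intro k hk; simp at hk; subst hk; exact hi, Or.inl rfl⟩
    | succ m ihm =>
      intro i hi hle
      rcases Nat.lt_or_ge i (m+1) with h | h
      · exact ihm i hi (by omega)
      · have hieq : i = m + 1 := by omega
        by_cases hprev : i - 1 ∈ T
        · obtain ⟨a, ha1, ha2, ha3⟩ := ihm (i-1) hprev (by omega)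
          refine ⟨a, by omega, ?_, ha3⟩
          intro k hk
          rw [Finset.mem_Icc] at hk
          rcases Nat.lt_or_ge k i with h' | h'
          · exact ha2 k (Finset.mem_Icc.2 ⟨hk.1, by omega⟩)
          · have : k = i := by omega
            subst this; exact hi
        · refine ⟨i, le_refl i, ?_, Or.inr hprev⟩
          intro k hk
          rw [Finset.mem_Icc] at hk
          have : k = i := by omega
          subst this; exact hi
  exact fun i hi => H i i hi (le_refl i)

/-- Existence of right end of maximal run. -/
lemma snk_run_right (T : Finset ℕ) (n1 : ℕ) (hT : ∀ j ∈ T, j < n1) : ∀ i ∈ T,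
    ∃ b, i ≤ b ∧ b < n1 ∧ (∀ k ∈ Finset.Icc i b, k ∈ T) ∧ b + 1 ∉ T := by
  have H : ∀ m, ∀ i ∈ T, n1 - i ≤ m →
      ∃ b, i ≤ b ∧ b < n1 ∧ (∀ k ∈ Finset.Icc i b, k ∈ T) ∧ b + 1 ∉ T := by
    intro m
    induction m with
    | zero =>
      intro i hi h0
      exact absurd (hT i hi) (by omega)
    | succ m ihm =>
      intro i hi hle
      by_cases hnext : i + 1 ∈ T
      · have h1 : n1 - (i+1) ≤ m := by have := hT _ hnext; omega
        obtain ⟨b, hb1, hb2, hb3, hb4⟩ := ihm (i+1) hnext h1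
        refine ⟨b, by omega, hb2, ?_, hb4⟩
        intro k hk
        rw [Finset.mem_Icc] at hk
        rcases Nat.lt_or_ge k (i+1) with h' | h'
        · have : k = i := by omega
          subst this; exact hi
        · exact hb3 k (Finset.mem_Icc.2 ⟨h', hk.2⟩)
      · refine ⟨i, le_refl i, hT i hi, ?_, hnext⟩
        intro k hk
        rw [Finset.mem_Icc] at hk
        have : k = i := by omega
        subst this; exact hi
  exact fun i hi => H n1 i hi (by omega)

/-- Two maximal runs through a common point coincide. -/
lemma snk_run_eq {T : Finset ℕ} {c d c' d' k : ℕ}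
    (h1 : ∀ j ∈ Finset.Icc c d, j ∈ T) (h2 : c = 0 ∨ c - 1 ∉ T) (h3 : d + 1 ∉ T)
    (h1' : ∀ j ∈ Finset.Icc c' d', j ∈ T) (h2' : c' = 0 ∨ c' - 1 ∉ T) (h3' : d' + 1 ∉ T)
    (hk : c ≤ k ∧ k ≤ d) (hk' : c' ≤ k ∧ k ≤ d') : c = c' ∧ d = d' := by
  constructor
  · rcases Nat.lt_trichotomy c c' with h | h | h
    · exfalso
      have : c' - 1 ∈ T := h1 _ (Finset.mem_Icc.2 ⟨by omega, by omega⟩)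
      rcases h2' with h' | h' <;> [omega; exact h' this]
    · exact h
    · exfalso
      have : c - 1 ∈ T := h1' _ (Finset.mem_Icc.2 ⟨by omega, by omega⟩)
      rcases h2 with h' | h' <;> [omega; exact h' this]
  · rcases Nat.lt_trichotomy d d' with h | h | h
    · exact absurd (h1' _ (Finset.mem_Icc.2 ⟨by omega, by omega⟩)) h3
    · exact h
    · exact absurd (h1 _ (Finset.mem_Icc.2 ⟨by omega, by omega⟩)) h3'


def snkPos (g : List Bool) (i : ℕ) : Pos := (snakeTiles g).getD i ((0:ℤ),(0:ℤ))

lemma snk_tiles_nodup (g : List Bool) : (snakeTiles g).Nodup := by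
  rw [snakeTiles]
  generalize (((0:ℤ),(0:ℤ)) : Pos) = p
  induction g generalizing p with
  | nil => simp [tilePosFrom]
  | cons b g ih =>
    rw [tilePosFrom]
    refine List.nodup_cons.2 ⟨?_, ih _⟩
    intro h
    have := snk_mono h
    split at this <;> simp at this <;> omega

lemma snk_pos_sum {g : List Bool} {i : ℕ} (h : i < (snakeTiles g).length) :
    (snkPos g i).1 + (snkPos g i).2 = (i : ℤ) := by
  rw [snkPos, List.getD_eq_getElem _ _ h]
  have := snk_sum g (0, 0) i h
  simp [snakeTiles] at this ⊢; exact this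

lemma snk_pos_inj {g : List Bool} {i j : ℕ} (hi : i < (snakeTiles g).length)
    (hj : j < (snakeTiles g).length) (h : snkPos g i = snkPos g j) : i = j := by
  have si := snk_pos_sum hi
  have sj := snk_pos_sum hj
  rw [h] at si
  omega

lemma snk_adj {g : List Bool} {i j : ℕ} {e : SEdge} (hi : i < (snakeTiles g).length)
    (hj : j < (snakeTiles g).length) (h1 : e ∈ tileEdges (snkPos g i))
    (h2 : e ∈ tileEdges (snkPos g j)) : i = j ∨ i = j + 1 ∨ j = i + 1 := by
  have s1 := snk_sigma h1
  have s2 := snk_sigma h2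
  rw [snk_pos_sum hi] at s1
  rw [snk_pos_sum hj] at s2
  omega

lemma snk_mem_subTiles {g : List Bool} {c d : ℕ} (hd : d < (snakeTiles g).length) {q : Pos} :
    q ∈ subTiles g c d ↔ ∃ k, c ≤ k ∧ k ≤ d ∧ snkPos g k = q := by
  constructor
  · intro h
    obtain ⟨j, hj, hq⟩ := List.mem_iff_getElem.1 h
    have hlen : (subTiles g c d).length = min (d + 1 - c) ((snakeTiles g).length - c) := by
      simp [subTiles, List.length_take, List.length_drop]
    rw [hlen] at hj
    refine ⟨c + j, by omega, by omega, ?_⟩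
    rw [snkPos, List.getD_eq_getElem _ _ (show c + j < (snakeTiles g).length by omega)]
    rw [← hq]
    simp [subTiles, List.getElem_take, List.getElem_drop]
  · rintro ⟨k, h1, h2, rfl⟩
    apply List.mem_iff_getElem.2
    have hlen : (subTiles g c d).length = min (d + 1 - c) ((snakeTiles g).length - c) := by
      simp [subTiles, List.length_take, List.length_drop]
    refine ⟨k - c, by omega, ?_⟩
    have hkc : c + (k - c) = k := by omega
    simp only [subTiles, List.getElem_take, List.getElem_drop, hkc]
    rw [snkPos, List.getD_eq_getElem _ _ (by omega)]

lemma snk_toFinset_subTiles {g : List Bool} {c d : ℕ} (hd : d < (snakeTiles g).length) :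
    (subTiles g c d).toFinset = (Finset.Icc c d).image (snkPos g) := by
  ext q
  rw [List.mem_toFinset, snk_mem_subTiles hd]
  simp only [Finset.mem_image, Finset.mem_Icc]
  constructor
  · rintro ⟨k, h1, h2, h3⟩; exact ⟨k, ⟨h1, h2⟩, h3⟩
  · rintro ⟨k, ⟨h1, h2⟩, h3⟩; exact ⟨k, h1, h2, h3⟩

lemma snk_CT {g : List Bool} {c d : ℕ} (hd : d < (snakeTiles g).length) (e : SEdge) :
    (subTiles g c d).countP (fun p => decide (e ∈ tileEdges p))
      = ((Finset.Icc c d).filter (fun k => e ∈ tileEdges (snkPos g k))).card := by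
  rw [List.countP_eq_length_filter]
  have hnd : (subTiles g c d).Nodup :=
    List.Nodup.sublist ((List.take_sublist _ _).trans (List.drop_sublist _ _))
      (snk_tiles_nodup g)
  rw [← List.toFinset_card_of_nodup (hnd.filter _), List.toFinset_filter,
    snk_toFinset_subTiles hd, Finset.filter_image]
  rw [Finset.card_image_of_injOn (fun x hx y hy hxy => by
    have hx' := (Finset.mem_Icc.1 (Finset.mem_filter.1 hx).1).2
    have hy' := (Finset.mem_Icc.1 (Finset.mem_filter.1 hy).1).2
    exact snk_pos_inj (by omega) (by omega) hxy)]
  congr 1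
  apply Finset.filter_congr
  intro x _
  simp

lemma snk_mem_subBoundary {g : List Bool} {c d : ℕ} (hcd : c ≤ d)
    (hd : d < (snakeTiles g).length) {e : SEdge} :
    e ∈ subBoundary g c d ↔
      ((Finset.Icc c d).filter (fun k => e ∈ tileEdges (snkPos g k))).card = 1 := by
  rw [subBoundary, Finset.mem_filter, snk_CT hd]
  constructor
  · exact fun h => h.2
  · intro h
    refine ⟨?_, h⟩
    obtain ⟨k, hk⟩ := Finset.card_eq_one.1 h
    have hkmem : k ∈ (Finset.Icc c d).filter (fun k => e ∈ tileEdges (snkPos g k)) := by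
      rw [hk]; exact Finset.mem_singleton_self k
    obtain ⟨hk1, hk2⟩ := Finset.mem_filter.1 hkmem
    rw [Finset.mem_Icc] at hk1
    refine Finset.mem_biUnion.2 ⟨snkPos g k, ?_, hk2⟩
    rw [List.mem_toFinset, snk_mem_subTiles hd]
    exact ⟨k, hk1.1, hk1.2, rfl⟩


lemma snk_part1 {g : List Bool} {P P' : Finset SEdge}
    (hP : IsPM (snakeEdges g) P) (hP' : IsPM (snakeEdges g) P') :
    ∀ v ∈ snakeVerts g,
      ((((P ∪ P') \ (P ∩ P')).filter (fun e => v ∈ edgeVerts e)).card = 0 ∨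
        (((P ∪ P') \ (P ∩ P')).filter (fun e => v ∈ edgeVerts e)).card = 2) := by
  intro v hv
  obtain ⟨eP, ⟨hePP, hePv⟩, hePu⟩ := hP.2 v hv
  obtain ⟨eQ, ⟨heQP, heQv⟩, heQu⟩ := hP'.2 v hv
  by_cases heq : eP = eQ
  · left
    rw [Finset.card_eq_zero]
    apply Finset.eq_empty_of_forall_notMem
    intro e he
    obtain ⟨heD, hev⟩ := Finset.mem_filter.1 he
    obtain ⟨heU, heI⟩ := Finset.mem_sdiff.1 heD
    rcases Finset.mem_union.1 heU with h | h
    · have : e = eP := hePu e ⟨h, hev⟩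
      subst this
      exact heI (Finset.mem_inter.2 ⟨hePP, heq ▸ heQP⟩)
    · have : e = eQ := heQu e ⟨h, hev⟩
      subst this
      exact heI (Finset.mem_inter.2 ⟨heq ▸ hePP, heQP⟩)
  · right
    have hset : ((P ∪ P') \ (P ∩ P')).filter (fun e => v ∈ edgeVerts e) = {eP, eQ} := by
      apply Finset.Subset.antisymm
      · intro e he
        obtain ⟨heD, hev⟩ := Finset.mem_filter.1 he
        obtain ⟨heU, _⟩ := Finset.mem_sdiff.1 heD
        rcases Finset.mem_union.1 heU with h | h
        · simp [hePu e ⟨h, hev⟩]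
        · simp [heQu e ⟨h, hev⟩]
      · intro e he
        rcases Finset.mem_insert.1 he with rfl | he
        · refine Finset.mem_filter.2 ⟨Finset.mem_sdiff.2 ⟨Finset.mem_union_left _ hePP, ?_⟩, hePv⟩
          intro h
          exact heq (heQu e ⟨(Finset.mem_inter.1 h).2, hePv⟩)
        · rw [Finset.mem_singleton] at he
          subst he
          refine Finset.mem_filter.2 ⟨Finset.mem_sdiff.2 ⟨Finset.mem_union_right _ heQP, ?_⟩, heQv⟩
          intro h
          exact heq (hePu e ⟨(Finset.mem_inter.1 h).1, heQv⟩).symm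
    rw [hset, Finset.card_insert_of_notMem (by simp [heq]), Finset.card_singleton]



/-- For any two perfect matchings `P, P'` of a snake graph `G`, the symmetric difference
`(P ∪ P') \ (P ∩ P')` is a disjoint union of cycles in `G` (every vertex meets `0` or `2`
of its edges), and each such cycle is the boundary of a set of consecutive tiles forming
a connected snake subgraph of `G`. -/
theorem symmdiff_is_union_of_subsnake_boundaries (g : List Bool) (P P' : Finset SEdge)
    (hP : IsPM (snakeEdges g) P) (hP' : IsPM (snakeEdges g) P') :
    (∀ v ∈ snakeVerts g,
      ((((P ∪ P') \ (P ∩ P')).filter (fun e => v ∈ edgeVerts e)).card = 0 ∨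
        (((P ∪ P') \ (P ∩ P')).filter (fun e => v ∈ edgeVerts e)).card = 2)) ∧
    ∃ I : Finset (ℕ × ℕ),
      (∀ q ∈ I, q.1 ≤ q.2 ∧ q.2 < (snakeTiles g).length) ∧
      ((I : Set (ℕ × ℕ)).Pairwise fun q r =>
        Disjoint (subBoundary g q.1 q.2) (subBoundary g r.1 r.2)) ∧
      (P ∪ P') \ (P ∩ P') = I.biUnion (fun q => subBoundary g q.1 q.2) := by
  refine ⟨snk_part1 hP hP', ?_⟩
  set n1 := (snakeTiles g).length with hn1
  set D := (P ∪ P') \ (P ∩ P') with hD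
  -- D is a subset of the snake edges
  have hDsub : D ⊆ snakeEdges g := by
    intro e he
    rcases Finset.mem_union.1 (Finset.mem_sdiff.1 he).1 with h | h
    · exact hP.1 h
    · exact hP'.1 h
  -- degrees are globally even
  have hdeg : ∀ v : Pos, (D.filter (fun e => v ∈ edgeVerts e)).card % 2 = 0 := by
    intro v
    by_cases hv : v ∈ snakeVerts g
    · rcases snk_part1 hP hP' v hv with h | h <;> rw [← hD] at h <;> omega
    · have : D.filter (fun e => v ∈ edgeVerts e) = ∅ := by
        apply Finset.eq_empty_of_forall_notMem
        intro e he
        obtain ⟨heD, hev⟩ := Finset.mem_filter.1 he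
        exact hv (Finset.mem_biUnion.2 ⟨e, hDsub heD, hev⟩)
      rw [this]; rfl
  obtain ⟨S, hSsub, hSD⟩ := snk_main g (0, 0) D hDsub hdeg
  -- translate S into a set of tile indices
  set T : Finset ℕ := (Finset.range n1).filter (fun i => snkPos g i ∈ S) with hT
  have hTlt : ∀ j ∈ T, j < n1 := fun j hj => Finset.mem_range.1 (Finset.mem_filter.1 hj).1
  -- the membership criterion for D in terms of indices
  have hbridge : ∀ e : SEdge,
      (T.filter (fun i => e ∈ tileEdges (snkPos g i))).card
        = (S.filter (fun q => e ∈ tileEdges q)).card := by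
    intro e
    apply Finset.card_bij (fun i _ => snkPos g i)
    · intro i hi
      obtain ⟨hiT, hie⟩ := Finset.mem_filter.1 hi
      exact Finset.mem_filter.2 ⟨(Finset.mem_filter.1 hiT).2, hie⟩
    · intro i hi j hj h
      exact snk_pos_inj (hTlt _ (Finset.mem_filter.1 hi).1) (hTlt _ (Finset.mem_filter.1 hj).1) h
    · intro q hq
      obtain ⟨hqS, hqe⟩ := Finset.mem_filter.1 hq
      have hmem : q ∈ snakeTiles g := List.mem_toFinset.1 (hSsub hqS)
      obtain ⟨i, hilt, hig⟩ := List.mem_iff_getElem.1 hmem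
      have hpos : snkPos g i = q := by rw [snkPos, List.getD_eq_getElem _ _ hilt, hig]
      refine ⟨i, Finset.mem_filter.2 ⟨Finset.mem_filter.2 ⟨Finset.mem_range.2 hilt, ?_⟩, ?_⟩, hpos⟩
      · rw [hpos]; exact hqS
      · rw [hpos]; exact hqe
  have memD : ∀ e : SEdge,
      e ∈ D ↔ (T.filter (fun i => e ∈ tileEdges (snkPos g i))).card % 2 = 1 := by
    intro e
    rw [hSD, snk_mem_Bd, ← hbridge e]
  -- any set of indices whose tiles share an edge has at most two elements
  have hle2 : ∀ (e : SEdge), (T.filter (fun i => e ∈ tileEdges (snkPos g i))).card ≤ 2 := by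
    intro e
    by_contra hgt
    have hgt2 : 2 < (T.filter (fun i => e ∈ tileEdges (snkPos g i))).card := by omega
    obtain ⟨x, hx, y, hy, z, hz, hxy, hxz, hyz⟩ := Finset.two_lt_card.1 hgt2
    obtain ⟨hxT, hxe⟩ := Finset.mem_filter.1 hx
    obtain ⟨hyT, hye⟩ := Finset.mem_filter.1 hy
    obtain ⟨hzT, hze⟩ := Finset.mem_filter.1 hz
    have h1 := snk_adj (hTlt _ hxT) (hTlt _ hyT) hxe hye
    have h2 := snk_adj (hTlt _ hxT) (hTlt _ hzT) hxe hze
    have h3 := snk_adj (hTlt _ hyT) (hTlt _ hzT) hye hze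
    omega
  -- the set of maximal runs of T
  refine ⟨((Finset.range n1) ×ˢ (Finset.range n1)).filter
    (fun q => q.1 ≤ q.2 ∧ (∀ k ∈ Finset.Icc q.1 q.2, k ∈ T) ∧
      (q.1 = 0 ∨ q.1 - 1 ∉ T) ∧ q.2 + 1 ∉ T), ?_, ?_, ?_⟩
  · rintro ⟨c, d⟩ hq
    obtain ⟨hmem, hcd, _, _, _⟩ := Finset.mem_filter.1 hq
    exact ⟨hcd, Finset.mem_range.1 (Finset.mem_product.1 hmem).2⟩
  · -- pairwise disjointness
    rintro ⟨c, d⟩ hq ⟨c', d'⟩ hr hne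
    obtain ⟨hmem, hcd, hrun, hmin, hmax⟩ := Finset.mem_filter.1 (Finset.mem_coe.1 hq)
    obtain ⟨hmem', hcd', hrun', hmin', hmax'⟩ := Finset.mem_filter.1 (Finset.mem_coe.1 hr)
    have hdlt : d < n1 := Finset.mem_range.1 (Finset.mem_product.1 hmem).2
    have hdlt' : d' < n1 := Finset.mem_range.1 (Finset.mem_product.1 hmem').2
    rw [Finset.disjoint_left]
    intro e he he'
    obtain ⟨k, hk⟩ := Finset.card_eq_one.1 ((snk_mem_subBoundary hcd hdlt).1 he)
    obtain ⟨k', hk'⟩ := Finset.card_eq_one.1 ((snk_mem_subBoundary hcd' hdlt').1 he')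
    have hkm : k ∈ Finset.Icc c d ∧ e ∈ tileEdges (snkPos g k) := by
      have := hk ▸ Finset.mem_singleton_self k
      exact ⟨(Finset.mem_filter.1 this).1, (Finset.mem_filter.1 this).2⟩
    have hkm' : k' ∈ Finset.Icc c' d' ∧ e ∈ tileEdges (snkPos g k') := by
      have := hk' ▸ Finset.mem_singleton_self k'
      exact ⟨(Finset.mem_filter.1 this).1, (Finset.mem_filter.1 this).2⟩
    rw [Finset.mem_Icc] at hkm hkm'
    have hklt : k < n1 := by omega
    have hklt' : k' < n1 := by omega
    rcases snk_adj hklt hklt' hkm.2 hkm'.2 with h | h | h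
    · -- same tile: the two maximal runs coincide
      subst h
      have := snk_run_eq hrun hmin hmax hrun' hmin' hmax' hkm.1 hkm'.1
      exact hne (by rw [Prod.ext_iff]; exact ⟨this.1, this.2⟩)
    · -- k = k' + 1
      rcases Nat.lt_or_ge k' d' with h' | h'
      · have hmem2 : k' + 1 ∈ (Finset.Icc c' d').filter
            (fun m => e ∈ tileEdges (snkPos g m)) := by
          refine Finset.mem_filter.2 ⟨Finset.mem_Icc.2 ⟨by omega, by omega⟩, ?_⟩
          rw [← h]; exact hkm.2
        rw [hk', Finset.mem_singleton] at hmem2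
        omega
      · -- k' = d', so k = d' + 1 lies in run (c, d), contradicting maximality of (c', d')
        have hkT : k ∈ T := hrun k (Finset.mem_Icc.2 ⟨hkm.1.1, hkm.1.2⟩)
        have : d' + 1 ∈ T := by
          have : k = d' + 1 := by omega
          rwa [this] at hkT
        exact hmax' this
    · -- k' = k + 1
      rcases Nat.lt_or_ge k d with h' | h'
      · have hmem2 : k + 1 ∈ (Finset.Icc c d).filter
            (fun m => e ∈ tileEdges (snkPos g m)) := by
          refine Finset.mem_filter.2 ⟨Finset.mem_Icc.2 ⟨by omega, by omega⟩, ?_⟩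
          rw [← h]; exact hkm'.2
        rw [hk, Finset.mem_singleton] at hmem2
        omega
      · have hkT : k' ∈ T := hrun' k' (Finset.mem_Icc.2 ⟨hkm'.1.1, hkm'.1.2⟩)
        have : d + 1 ∈ T := by
          have : k' = d + 1 := by omega
          rwa [this] at hkT
        exact hmax this
  · -- the union equality
    ext e
    rw [Finset.mem_biUnion]
    constructor
    · intro heD
      have hodd := (memD e).1 heD
      have hcd1 : (T.filter (fun i => e ∈ tileEdges (snkPos g i))).card = 1 := by
        have := hle2 e; omega
      obtain ⟨i, hi⟩ := Finset.card_eq_one.1 hcd1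
      have him : i ∈ T ∧ e ∈ tileEdges (snkPos g i) := by
        have := hi ▸ Finset.mem_singleton_self i
        exact ⟨(Finset.mem_filter.1 this).1, (Finset.mem_filter.1 this).2⟩
      obtain ⟨hiT, hie⟩ := him
      have hin : i < n1 := hTlt _ hiT
      obtain ⟨a, ha1, ha2, ha3⟩ := snk_run_left T i hiT
      obtain ⟨b, hb1, hb2, hb3, hb4⟩ := snk_run_right T n1 hTlt i hiT
      have hrunab : ∀ k ∈ Finset.Icc a b, k ∈ T := by
        intro k hkab
        rw [Finset.mem_Icc] at hkab
        rcases le_or_gt k i with h' | h'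
        · exact ha2 k (Finset.mem_Icc.2 ⟨hkab.1, h'⟩)
        · exact hb3 k (Finset.mem_Icc.2 ⟨by omega, hkab.2⟩)
      refine ⟨(a, b), ?_, ?_⟩
      · refine Finset.mem_filter.2 ⟨?_, by omega, hrunab, ha3, hb4⟩
        exact Finset.mem_product.2 ⟨Finset.mem_range.2 (by omega), Finset.mem_range.2 hb2⟩
      · rw [snk_mem_subBoundary (by omega : a ≤ b) hb2]
        have hflt : (Finset.Icc a b).filter (fun k => e ∈ tileEdges (snkPos g k)) = {i} := by
          apply Finset.Subset.antisymm
          · intro k hkf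
            obtain ⟨hk1, hk2⟩ := Finset.mem_filter.1 hkf
            have hkT : k ∈ T := hrunab k hk1
            have : k ∈ T.filter (fun i => e ∈ tileEdges (snkPos g i)) :=
              Finset.mem_filter.2 ⟨hkT, hk2⟩
            rw [hi] at this
            exact this
          · intro k hkf
            rw [Finset.mem_singleton] at hkf
            subst hkf
            exact Finset.mem_filter.2 ⟨Finset.mem_Icc.2 ⟨ha1, hb1⟩, hie⟩
        rw [hflt, Finset.card_singleton]
    · rintro ⟨⟨c, d⟩, hqI, hqe⟩
      obtain ⟨hmem, hcd, hrun, hmin, hmax⟩ := Finset.mem_filter.1 hqI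
      have hdlt : d < n1 := Finset.mem_range.1 (Finset.mem_product.1 hmem).2
      obtain ⟨k, hk⟩ := Finset.card_eq_one.1 ((snk_mem_subBoundary hcd hdlt).1 hqe)
      have hkm : k ∈ Finset.Icc c d ∧ e ∈ tileEdges (snkPos g k) := by
        have := hk ▸ Finset.mem_singleton_self k
        exact ⟨(Finset.mem_filter.1 this).1, (Finset.mem_filter.1 this).2⟩
      have hkIcc := Finset.mem_Icc.1 hkm.1
      have hkT : k ∈ T := hrun k hkm.1
      have hklt : k < n1 := by omega
      apply (memD e).2
      have hflt : T.filter (fun i => e ∈ tileEdges (snkPos g i)) = {k} := by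
        apply Finset.Subset.antisymm
        · intro m hmf
          obtain ⟨hmT, hme⟩ := Finset.mem_filter.1 hmf
          have hmlt : m < n1 := hTlt _ hmT
          rw [Finset.mem_singleton]
          rcases snk_adj hmlt hklt hme hkm.2 with h | h | h
          · exact h
          · -- m = k + 1
            rcases Nat.lt_or_ge k d with h' | h'
            · have hmem2 : k + 1 ∈ (Finset.Icc c d).filter
                  (fun j => e ∈ tileEdges (snkPos g j)) := by
                refine Finset.mem_filter.2 ⟨Finset.mem_Icc.2 ⟨by omega, by omega⟩, ?_⟩
                rw [← h]; exact hme
              rw [hk, Finset.mem_singleton] at hmem2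
              omega
            · exfalso
              apply hmax
              have : m = d + 1 := by omega
              rwa [this] at hmT
          · -- k = m + 1
            rcases Nat.lt_or_ge c k with h' | h'
            · have hmem2 : m ∈ (Finset.Icc c d).filter
                  (fun j => e ∈ tileEdges (snkPos g j)) := by
                refine Finset.mem_filter.2 ⟨Finset.mem_Icc.2 ⟨by omega, by omega⟩, hme⟩
              rw [hk, Finset.mem_singleton] at hmem2
              omega
            · exfalso
              have hc : k = c := by omega
              rcases hmin with h0 | h0
              · omega
              · apply h0
                have : m = c - 1 := by omega
                rwa [this] at hmT
        · intro m hmf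
          rw [Finset.mem_singleton] at hmf
          subst hmf
          exact Finset.mem_filter.2 ⟨hkT, hkm.2⟩
      rw [hflt, Finset.card_singleton]
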